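/- The clutter C with vertex set {a,b,c,d,e} and edges {a,b,c} and {c,d,e} is not of the form C_3(G) for any graph G: there is no simple graph G on these vertices whose collection of 3-element connected induced subsets is exactly {{a,b,c}, {c,d,e}}. -/
import Mathlib

open SimpleGraph

/-- In a connected induced subgraph, any vertex distinct from some other vertex has a neighbor
in the set. -/
lemma exists_neighbor {V : Type*} (G : SimpleGraph V) (s : Set V)
    (hc : (G.induce s).Connected) {v w : V} (hv : v ∈ s) (hw : w ∈ s) (hvw : v ≠ w) :
    ∃ u ∈ s, G.Adj v u := by
  obtain ⟨p⟩ := hc ⟨v, hv⟩ ⟨w, hw⟩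
  cases p with
  | nil => exact (hvw rfl).elim
  | @cons _ b _ h q => exact ⟨b.val, b.2, h⟩

/-- A star on three vertices is connected. -/
lemma star_connected {V : Type*} (G : SimpleGraph V) (s : Set V) {a b c : V}
    (ha : a ∈ s) (hb : b ∈ s) (hcc : c ∈ s)
    (hall : ∀ x ∈ s, x = a ∨ x = b ∨ x = c)
    (h1 : G.Adj b a) (h2 : G.Adj b c) : (G.induce s).Connected := by
  have key : ∀ x : s, (G.induce s).Reachable x ⟨b, hb⟩ := by
    rintro ⟨x, hx⟩
    rcases hall x hx with rfl | rfl | rfl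
    · exact Adj.reachable (by exact h1.symm)
    · exact Reachable.refl _
    · exact Adj.reachable (by exact h2.symm)
  have : Nonempty s := ⟨⟨b, hb⟩⟩
  exact Connected.mk (fun x y => (key x).trans (key y).symm)

theorem not_connected_graph_clutter :
    ¬ ∃ G : SimpleGraph (Fin 5),
      ∀ A : Finset (Fin 5),
        (A.card = 3 ∧ (G.induce (A : Set (Fin 5))).Connected) ↔
          (A = {0, 1, 2} ∨ A = {2, 3, 4}) := by
  rintro ⟨G, h⟩
  have h1 : ((({0,1,2} : Finset (Fin 5)) : Set (Fin 5))) = {0,1,2} := by simp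
  have c1 : (G.induce (({0,1,2} : Finset (Fin 5)) : Set (Fin 5))).Connected :=
    ((h {0,1,2}).mpr (Or.inl rfl)).2
  have c2 : (G.induce (({2,3,4} : Finset (Fin 5)) : Set (Fin 5))).Connected :=
    ((h {2,3,4}).mpr (Or.inr rfl)).2
  obtain ⟨u, hu, hadj⟩ := exists_neighbor G _ c1 (v := 2) (w := 0) (by simp) (by simp) (by decide)
  obtain ⟨u', hu', hadj'⟩ := exists_neighbor G _ c2 (v := 2) (w := 3) (by simp) (by simp) (by decide)
  have hune : u ≠ 2 := fun e => G.irrefl (e ▸ hadj)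
  have hune' : u' ≠ 2 := fun e => G.irrefl (e ▸ hadj')
  simp only [Finset.coe_insert, Finset.coe_singleton, Set.mem_insert_iff,
    Set.mem_singleton_iff] at hu hu'
  have hu01 : u = 0 ∨ u = 1 := by rcases hu with h | h | h <;> simp_all
  have hu34 : u' = 3 ∨ u' = 4 := by rcases hu' with h | h | h <;> simp_all
  set A : Finset (Fin 5) := {u, 2, u'} with hA
  have hconn : (G.induce (A : Set (Fin 5))).Connected := by
    apply star_connected G _ (a := u) (b := 2) (c := u')
      (by simp [hA]) (by simp [hA]) (by simp [hA]) ?_ hadj hadj'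
    intro x hx
    simpa [hA, Set.mem_insert_iff, Set.mem_singleton_iff] using hx
  have hcard : A.card = 3 := by
    rcases hu01 with rfl | rfl <;> rcases hu34 with rfl | rfl <;> decide
  have := (h A).mp ⟨hcard, hconn⟩
  rcases hu01 with rfl | rfl <;> rcases hu34 with rfl | rfl <;> revert this <;> decide
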